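/- Let 0 < σ < 1 and let ν be real such that σn − ν − 1/2 is not a nonpositive integer for any natural number n. Set ϑ = −ν − 3/2 and define Ψ(w) = Σ_{n=0}^∞ Γ(σn − ν − 1/2) w^n / Γ(n + 3/2) (which converges for all complex w). Then for every complex number ζ: Σ_{n=0}^∞ ζ^n / (Γ(n + 3/2) Γ(−σn + ν + 3/2)) = (i/(2π)) · [ e^{iπϑ} Ψ(ζ e^{iπσ}) − e^{−iπϑ} Ψ(ζ e^{−iπσ}) ]. Equivalently, (z/2)^{−ν−1} L_ν(z; −σ) = (i/(2π)){ e^{iπϑ} Ψ(ζ e^{iπσ}) − e^{−iπϑ} Ψ(ζ e^{−iπσ}) } with ζ = z²/4. -/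

import Mathlib

open Filter Topology

/-- The Wright function `₂Ψ₁(w) = Σ_{n≥0} Γ(σn−ν−1/2) wⁿ / Γ(n+3/2)`. -/
noncomputable def wrightPsi21 (σ ν : ℝ) (w : ℂ) : ℂ :=
  ∑' n : ℕ, Complex.Gamma ((σ : ℂ) * (n : ℂ) - (ν : ℂ) - 1 / 2) * w ^ n /
    Complex.Gamma ((n : ℂ) + 3 / 2)

/-- Log-convexity bound: `Γ(s+σ) ≤ Γ(s) * s^σ` for `s ≥ 1`, `0 ≤ σ ≤ 1`. -/
lemma myGamma_add_le (s σ : ℝ) (hs : 1 ≤ s) (h0 : 0 ≤ σ) (h1 : σ ≤ 1) :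
    Real.Gamma (s + σ) ≤ Real.Gamma s * s ^ σ := by
  have hs0 : (0:ℝ) < s := lt_of_lt_of_le one_pos hs
  have hΓs : 0 < Real.Gamma s := Real.Gamma_pos_of_pos hs0
  have hΓs1 : 0 < Real.Gamma (s + 1) := Real.Gamma_pos_of_pos (by linarith)
  have hΓsσ : 0 < Real.Gamma (s + σ) := Real.Gamma_pos_of_pos (by linarith)
  have h := Real.convexOn_log_Gamma.2 (Set.mem_Ioi.2 hs0)
      (Set.mem_Ioi.2 (show (0:ℝ) < s + 1 by linarith))
      (by linarith : (0:ℝ) ≤ 1 - σ) h0 (by ring)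
  have harg : (1 - σ) • s + σ • (s + 1) = s + σ := by
    simp only [smul_eq_mul]; ring
  rw [harg] at h
  simp only [Function.comp_apply, smul_eq_mul] at h
  have h2 : Real.Gamma (s + σ) ≤
      Real.exp ((1 - σ) * Real.log (Real.Gamma s) + σ * Real.log (Real.Gamma (s + 1))) := by
    calc Real.Gamma (s + σ) = Real.exp (Real.log (Real.Gamma (s + σ))) :=
          (Real.exp_log hΓsσ).symm
      _ ≤ _ := Real.exp_le_exp.2 h
  have h3 : Real.exp ((1 - σ) * Real.log (Real.Gamma s) + σ * Real.log (Real.Gamma (s + 1)))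
      = Real.Gamma s ^ (1 - σ) * Real.Gamma (s + 1) ^ σ := by
    rw [Real.exp_add, Real.rpow_def_of_pos hΓs, Real.rpow_def_of_pos hΓs1,
      mul_comm (Real.log (Real.Gamma s)), mul_comm (Real.log (Real.Gamma (s+1)))]
  have h4 : Real.Gamma s ^ (1 - σ) * Real.Gamma (s + 1) ^ σ = Real.Gamma s * s ^ σ := by
    calc Real.Gamma s ^ (1 - σ) * Real.Gamma (s + 1) ^ σ
        = Real.Gamma s ^ (1 - σ) * (s ^ σ * Real.Gamma s ^ σ) := by
          rw [Real.Gamma_add_one (ne_of_gt hs0), Real.mul_rpow hs0.le hΓs.le]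
      _ = (Real.Gamma s ^ (1 - σ) * Real.Gamma s ^ σ) * s ^ σ := by ring
      _ = Real.Gamma s * s ^ σ := by rw [← Real.rpow_add hΓs]; norm_num
  linarith [h3 ▸ h2, h4]

lemma mySummable (σ ν : ℝ) (hσ0 : 0 < σ) (hσ1 : σ < 1) (w : ℂ) :
    Summable (fun n : ℕ => Complex.Gamma ((σ : ℂ) * (n : ℂ) - (ν : ℂ) - 1 / 2) * w ^ n /
      Complex.Gamma ((n : ℂ) + 3 / 2)) := by
  set c : ℝ := -ν - 1/2 with hc
  have hs_tend : Tendsto (fun n : ℕ => σ * (n:ℝ) + c) atTop atTop := by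
    apply tendsto_atTop_add_const_right
    exact (tendsto_natCast_atTop_atTop).const_mul_atTop hσ0
  -- the rpow factor tends to 0
  have hr_tend : Tendsto (fun n : ℕ => ‖w‖ * (σ * (n:ℝ) + c) ^ (σ - 1)) atTop (𝓝 0) := by
    have h1 : Tendsto (fun x : ℝ => x ^ (-(1 - σ))) atTop (𝓝 0) :=
      tendsto_rpow_neg_atTop (by linarith)
    have h2 : Tendsto (fun n : ℕ => (σ * (n:ℝ) + c) ^ (σ - 1)) atTop (𝓝 0) := by
      have := h1.comp hs_tend
      simpa [Function.comp_def, show -(1 - σ) = σ - 1 by ring] using this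
    simpa using h2.const_mul ‖w‖
  have hEv1 : ∀ᶠ n : ℕ in atTop, 1 ≤ σ * (n:ℝ) + c := hs_tend.eventually_ge_atTop 1
  have hEv2 : ∀ᶠ n : ℕ in atTop, ‖w‖ * (σ * (n:ℝ) + c) ^ (σ - 1) ≤ 1/2 :=
    hr_tend.eventually_le_const (by norm_num)
  have hEv3 : ∀ᶠ n : ℕ in atTop, σ * (n:ℝ) + c ≤ (n:ℝ) + 3/2 := by
    have : Tendsto (fun n : ℕ => (1 - σ) * (n:ℝ)) atTop atTop :=
      (tendsto_natCast_atTop_atTop).const_mul_atTop (by linarith)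
    filter_upwards [this.eventually_ge_atTop (c - 3/2)] with n hn
    nlinarith
  apply summable_of_ratio_norm_eventually_le (r := 1/2) (by norm_num)
  filter_upwards [hEv1, hEv2, hEv3] with n h1 h2 h3
  set s : ℝ := σ * (n:ℝ) + c with hsdef
  have hs0 : (0:ℝ) < s := by linarith
  have hN : (0:ℝ) < (n:ℝ) + 3/2 := by positivity
  -- rewrite complex Gammas as real
  have e1 : (σ : ℂ) * ((n:ℕ) : ℂ) - (ν : ℂ) - 1 / 2 = ((s : ℝ) : ℂ) := by
    push_cast [hsdef, hc]; ring
  have e2 : (σ : ℂ) * (((n+1:ℕ)) : ℂ) - (ν : ℂ) - 1 / 2 = (((s + σ) : ℝ) : ℂ) := by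
    push_cast [hsdef, hc]; ring
  have e3 : (((n:ℕ)) : ℂ) + 3 / 2 = ((((n:ℝ) + 3/2) : ℝ) : ℂ) := by push_cast; ring
  have e4 : (((n+1:ℕ)) : ℂ) + 3 / 2 = (((((n:ℝ) + 3/2) + 1) : ℝ) : ℂ) := by push_cast; ring
  simp only [e1, e2, e3, e4, Complex.Gamma_ofReal]
  have hΓN : 0 < Real.Gamma ((n:ℝ) + 3/2) := Real.Gamma_pos_of_pos hN
  have hΓs : 0 < Real.Gamma s := Real.Gamma_pos_of_pos hs0
  have hΓsσ : 0 < Real.Gamma (s + σ) := Real.Gamma_pos_of_pos (by linarith)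
  rw [Real.Gamma_add_one (ne_of_gt hN)]
  simp only [Complex.norm_real, norm_div, norm_mul, norm_pow]
  rw [Real.norm_of_nonneg hΓsσ.le, Real.norm_of_nonneg hΓs.le,
    Real.norm_of_nonneg hΓN.le, Real.norm_of_nonneg hN.le]
  -- main estimate
  have key : Real.Gamma (s + σ) * ‖w‖ / ((n:ℝ) + 3/2) ≤ 1/2 * Real.Gamma s := by
    have hA := myGamma_add_le s σ h1 hσ0.le hσ1.le
    have hB : s ^ σ = s ^ (σ - 1) * s := by
      rw [← Real.rpow_add_one (ne_of_gt hs0)]; ring_nf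
    have hrp : (0:ℝ) ≤ s ^ (σ - 1) := Real.rpow_nonneg hs0.le _
    have hsN : s / ((n:ℝ) + 3/2) ≤ 1 := (div_le_one hN).2 h3
    have hsN0 : (0:ℝ) ≤ s / ((n:ℝ) + 3/2) := by positivity
    calc Real.Gamma (s + σ) * ‖w‖ / ((n:ℝ) + 3/2)
        ≤ Real.Gamma s * s ^ σ * ‖w‖ / ((n:ℝ) + 3/2) := by
          gcongr
      _ = Real.Gamma s * ((‖w‖ * s ^ (σ - 1)) * (s / ((n:ℝ) + 3/2))) := by
          rw [hB]; field_simp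
      _ ≤ Real.Gamma s * (1/2 * 1) := by
          apply mul_le_mul_of_nonneg_left ?_ hΓs.le
          exact mul_le_mul h2 hsN hsN0 (by norm_num)
      _ = 1/2 * Real.Gamma s := by ring
  calc Real.Gamma (s + σ) * ‖w‖ ^ (n+1) / (((n:ℝ)+3/2) * Real.Gamma ((n:ℝ)+3/2))
      = (Real.Gamma (s + σ) * ‖w‖ / ((n:ℝ)+3/2)) * (‖w‖ ^ n / Real.Gamma ((n:ℝ)+3/2)) := by
        rw [pow_succ]; field_simp
    _ ≤ (1/2 * Real.Gamma s) * (‖w‖ ^ n / Real.Gamma ((n:ℝ)+3/2)) := by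
        apply mul_le_mul_of_nonneg_right key (by positivity)
    _ = 1/2 * (Real.Gamma s * ‖w‖ ^ n / Real.Gamma ((n:ℝ)+3/2)) := by ring

/-- Reciprocal reflection: `1/Γ(1−s) = Γ(s) sin(πs)/π` when `s` is not a pole of `Γ`. -/
lemma myRecip_reflection {s : ℂ} (hs : ∀ m : ℕ, s ≠ -(m : ℂ)) :
    1 / Complex.Gamma (1 - s) = Complex.Gamma s * Complex.sin (↑Real.pi * s) / ↑Real.pi := by
  have hπ : (Real.pi : ℂ) ≠ 0 := Complex.ofReal_ne_zero.2 Real.pi_ne_zero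
  have hΓs : Complex.Gamma s ≠ 0 := Complex.Gamma_ne_zero hs
  by_cases h0 : Complex.sin (↑Real.pi * s) = 0
  · -- s is an integer; by hs it is a positive integer, so Γ(1−s) = 0 and both sides vanish
    have hint : ∃ k : ℤ, s = k := by
      rw [mul_comm] at h0
      obtain ⟨k, hk⟩ := Complex.sin_eq_zero_iff.1 h0
      exact ⟨k, by field_simp at hk; tauto⟩
    obtain ⟨k, hk⟩ := hint
    have hkpos : 0 < k := by
      by_contra hle
      push_neg at hle
      obtain ⟨m, hm⟩ := Int.exists_eq_neg_ofNat hle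
      exact hs m (by rw [hk, hm]; push_cast; ring)
    have hΓ0 : Complex.Gamma (1 - s) = 0 := by
      obtain ⟨m, hm⟩ : ∃ m : ℕ, (k : ℂ) = (m:ℂ) + 1 := by
        refine ⟨(k - 1).toNat, ?_⟩
        have h2 : (((k - 1).toNat : ℕ) : ℂ) = (k : ℂ) - 1 := by
          exact_mod_cast congrArg (fun z : ℤ => (z : ℂ))
            (Int.toNat_of_nonneg (show (0:ℤ) ≤ k - 1 by omega))
        rw [h2]; ring
      rw [hk, hm, show (1 : ℂ) - ((m:ℂ) + 1) = -(m:ℂ) by ring]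
      exact Complex.Gamma_neg_nat_eq_zero m
    rw [hΓ0, h0]
    simp
  · have href := Complex.Gamma_mul_Gamma_one_sub s
    have hΓ1s : Complex.Gamma (1 - s) ≠ 0 := by
      intro h
      rw [h, mul_zero, eq_comm, div_eq_zero_iff] at href
      exact hπ (href.resolve_right h0)
    rw [eq_div_iff h0] at href
    rw [div_eq_div_iff hΓ1s hπ]
    linear_combination -href

lemma myTerm (σ ν : ℝ)
    (hreg : ∀ n m : ℕ, σ * (n : ℝ) - ν - 1 / 2 ≠ -(m : ℝ)) (ζ : ℂ) (n : ℕ) :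
    ζ ^ n / (Complex.Gamma ((n : ℂ) + 3 / 2) *
        Complex.Gamma (-(σ : ℂ) * (n : ℂ) + (ν : ℂ) + 3 / 2))
      = Complex.I / (2 * (Real.pi : ℂ)) *
        (Complex.exp ((Real.pi : ℂ) * Complex.I * (-(ν : ℂ) - 3 / 2)) *
            (Complex.Gamma ((σ : ℂ) * (n : ℂ) - (ν : ℂ) - 1 / 2) *
              (ζ * Complex.exp ((Real.pi : ℂ) * Complex.I * (σ : ℂ))) ^ n /
              Complex.Gamma ((n : ℂ) + 3 / 2)) -
          Complex.exp (-(Real.pi : ℂ) * Complex.I * (-(ν : ℂ) - 3 / 2)) *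
            (Complex.Gamma ((σ : ℂ) * (n : ℂ) - (ν : ℂ) - 1 / 2) *
              (ζ * Complex.exp (-(Real.pi : ℂ) * Complex.I * (σ : ℂ))) ^ n /
              Complex.Gamma ((n : ℂ) + 3 / 2))) := by
  set π' : ℂ := (Real.pi : ℂ)
  set I := Complex.I
  set s : ℂ := (σ : ℂ) * (n : ℂ) - (ν : ℂ) - 1 / 2 with hsdef
  set A : ℂ := Complex.Gamma ((n : ℂ) + 3 / 2) with hA
  have hπ : π' ≠ 0 := Complex.ofReal_ne_zero.2 Real.pi_ne_zero
  have hAne : A ≠ 0 := by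
    apply Complex.Gamma_ne_zero_of_re_pos
    simp only [Complex.add_re, Complex.natCast_re]
    norm_num
    positivity
  have hs_ne : ∀ m : ℕ, s ≠ -(m : ℂ) := by
    intro m h
    apply hreg n m
    have : s = ((σ * (n:ℝ) - ν - 1/2 : ℝ) : ℂ) := by rw [hsdef]; push_cast; ring
    rw [this] at h
    exact_mod_cast h
  have h1s : -(σ : ℂ) * (n : ℂ) + (ν : ℂ) + 3 / 2 = 1 - s := by rw [hsdef]; ring
  -- combine the exponentials
  have key1 : Complex.exp (π' * I * (-(ν : ℂ) - 3 / 2)) *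
      (ζ * Complex.exp (π' * I * (σ : ℂ))) ^ n = ζ ^ n * Complex.exp (π' * (s - 1) * I) := by
    rw [mul_pow, ← Complex.exp_nat_mul, ← mul_assoc, mul_comm _ (ζ ^ n), mul_assoc,
      ← Complex.exp_add]
    congr 1
    rw [hsdef]; ring
  have key2 : Complex.exp (-π' * I * (-(ν : ℂ) - 3 / 2)) *
      (ζ * Complex.exp (-π' * I * (σ : ℂ))) ^ n = ζ ^ n * Complex.exp (-(π' * (s - 1)) * I) := by
    rw [mul_pow, ← Complex.exp_nat_mul, ← mul_assoc, mul_comm _ (ζ ^ n), mul_assoc,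
      ← Complex.exp_add]
    congr 1
    rw [hsdef]; ring
  have g1 : ∀ E P : ℂ, Complex.exp E * (Complex.Gamma s * P / A)
      = Complex.Gamma s * (Complex.exp E * P) / A := by intro E P; ring
  rw [h1s, g1, g1, key1, key2, Complex.exp_mul_I, Complex.exp_mul_I,
    Complex.cos_neg, Complex.sin_neg]
  have hsin : Complex.sin (π' * (s - 1)) = -Complex.sin (π' * s) := by
    rw [show π' * (s - 1) = π' * s - π' by ring, Complex.sin_sub_pi]
  rw [hsin]
  have hrefl := myRecip_reflection hs_ne
  rw [div_eq_mul_one_div (ζ ^ n) (A * Complex.Gamma (1 - s)),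
    show 1 / (A * Complex.Gamma (1 - s)) = (1 / A) * (1 / Complex.Gamma (1 - s)) by
      rw [one_div_mul_eq_div, div_div]; ring_nf,
    hrefl]
  field_simp
  simp only [π', I]
  linear_combination (norm := ring_nf) (2 * ζ ^ n * Complex.Gamma s * Complex.sin ((Real.pi : ℂ) * s) * (Real.pi : ℂ)) * Complex.I_sq

theorem struveL_neg_sigma_psi_decomposition (σ ν : ℝ) (hσ0 : 0 < σ)
    (hσ1 : σ < 1)
    (hreg : ∀ n m : ℕ, σ * (n : ℝ) - ν - 1 / 2 ≠ -(m : ℝ)) (ζ : ℂ) :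
    (∑' n : ℕ, ζ ^ n /
        (Complex.Gamma ((n : ℂ) + 3 / 2) *
          Complex.Gamma (-(σ : ℂ) * (n : ℂ) + (ν : ℂ) + 3 / 2)))
      = Complex.I / (2 * (Real.pi : ℂ)) *
        (Complex.exp ((Real.pi : ℂ) * Complex.I * (-(ν : ℂ) - 3 / 2)) *
            wrightPsi21 σ ν (ζ * Complex.exp ((Real.pi : ℂ) * Complex.I * (σ : ℂ))) -
          Complex.exp (-(Real.pi : ℂ) * Complex.I * (-(ν : ℂ) - 3 / 2)) *
            wrightPsi21 σ ν (ζ * Complex.exp (-(Real.pi : ℂ) * Complex.I * (σ : ℂ)))) := by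
  have S1 := mySummable σ ν hσ0 hσ1 (ζ * Complex.exp ((Real.pi : ℂ) * Complex.I * (σ : ℂ)))
  have S2 := mySummable σ ν hσ0 hσ1 (ζ * Complex.exp (-(Real.pi : ℂ) * Complex.I * (σ : ℂ)))
  rw [wrightPsi21, wrightPsi21, ← tsum_mul_left, ← tsum_mul_left,
    ← Summable.tsum_sub (S1.mul_left _) (S2.mul_left _), ← tsum_mul_left]
  exact tsum_congr fun n => myTerm σ ν hreg ζ n
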